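/- For every prime p with p ≥ 5, the binomial coefficient (2p−1 choose p−1) satisfies (2p−1 choose p−1) ≡ 1 (mod p^3). -/

import Mathlib

open Finset

-- expansion lemma
lemma aux_expand {R : Type*} [CommRing R] (π : R) (hπ : π^3 = 0) (x : ℕ → R) (S : Finset ℕ) :
    ∃ E, ∏ j ∈ S, (1 + π * x j) = 1 + π * (∑ j ∈ S, x j) + π^2 * E ∧
      2 * E = (∑ j ∈ S, x j)^2 - ∑ j ∈ S, (x j)^2 := by
  induction S using Finset.induction with
  | empty => exact ⟨0, by simp, by simp⟩
  | @insert a S ha ih =>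
    obtain ⟨E, hE, h2E⟩ := ih
    refine ⟨E + x a * (∑ j ∈ S, x j), ?_, ?_⟩
    · rw [Finset.prod_insert ha, Finset.sum_insert ha, hE]
      linear_combination (x a * E) * hπ
    · rw [Finset.sum_insert ha, Finset.sum_insert ha]
      linear_combination h2E

-- sum over univ of ZMod p equals sum over range p
lemma aux_sum_univ {p : ℕ} [NeZero p] {M : Type*} [AddCommMonoid M] (f : ZMod p → M) :
    ∑ x : ZMod p, f x = ∑ j ∈ range p, f (j : ZMod p) := by
  refine Finset.sum_nbij' (fun x => (ZMod.val x)) (fun j => (j : ZMod p)) ?_ ?_ ?_ ?_ ?_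
  · intro a _; exact Finset.mem_range.mpr (ZMod.val_lt a)
  · intro a _; exact Finset.mem_univ _
  · intro a _; exact ZMod.natCast_rightInverse a
  · intro a ha; exact ZMod.val_cast_of_lt (Finset.mem_range.mp ha)
  · intro a _; rw [ZMod.natCast_rightInverse a]

lemma aux_six_sum (n : ℕ) : 6 * ∑ i ∈ range n, (i:ℤ)^2 = 2*n^3 - 3*n^2 + n := by
  induction n with
  | zero => simp
  | succ n ih => rw [Finset.sum_range_succ]; push_cast; push_cast at ih; ring_nf; ring_nf at ih; linarith

lemma aux_p_dvd_sum_sq (p : ℕ) (hp : p.Prime) (h5 : 5 ≤ p) :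
    (p : ℤ) ∣ ∑ i ∈ range p, (i:ℤ)^2 := by
  have h6 : (p:ℤ) ∣ 6 * ∑ i ∈ range p, (i:ℤ)^2 := by
    rw [aux_six_sum]; exact ⟨2*p^2 - 3*p + 1, by ring⟩
  have hpp : Prime (p:ℤ) := Int.prime_iff_natAbs_prime.mpr (by simpa using hp)
  rcases hpp.dvd_or_dvd h6 with h | h
  · exfalso
    have hd : p ∣ 6 := by exact_mod_cast h
    have hle := Nat.le_of_dvd (by norm_num) hd
    interval_cases p <;> revert hd hp <;> decide
  · exact h

lemma aux_sum_sq_zmod (p : ℕ) [NeZero p] (hp : p.Prime) (h5 : 5 ≤ p) :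
    ∑ x : ZMod p, x^2 = 0 := by
  rw [aux_sum_univ (fun x => x^2)]
  have : ((∑ i ∈ range p, (i:ℤ)^2 : ℤ) : ZMod p) = ∑ j ∈ range p, ((j:ZMod p))^2 := by
    push_cast; rfl
  rw [← this, ZMod.intCast_zmod_eq_zero_iff_dvd]
  exact aux_p_dvd_sum_sq p hp h5

lemma aux_inv_sq_sum (p : ℕ) [NeZero p] (hp : p.Prime) (h5 : 5 ≤ p) :
    ∑ x : ZMod p, (x⁻¹)^2 = 0 := by
  haveI : Fact p.Prime := ⟨hp⟩
  have : ∑ x : ZMod p, (x⁻¹)^2 = ∑ x : ZMod p, x^2 :=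
    Fintype.sum_bijective (fun x => x⁻¹) inv_involutive.bijective _ _ (fun x => rfl)
  rw [this]; exact aux_sum_sq_zmod p hp h5

-- nat identity: (p-1)! * choose (2p-1) (p-1) = ∏_{j ∈ range (p-1)} (p + 1 + j)
lemma aux_nat_prod (p : ℕ) (h5 : 5 ≤ p) :
    Nat.factorial (p-1) * Nat.choose (2*p-1) (p-1) = ∏ j ∈ range (p-1), (p + 1 + j) := by
  rw [← Nat.descFactorial_eq_factorial_mul_choose, Nat.descFactorial_eq_prod_range]
  rw [← Finset.prod_range_reflect (fun j => p + 1 + j) (p-1)]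
  refine Finset.prod_congr rfl ?_
  intro i hi
  have := Finset.mem_range.mp hi
  omega

-- lifting lemma
lemma aux_lift (p : ℕ) (hp : p.Prime) (w : ZMod (p^3))
    (h : ZMod.castHom (dvd_pow_self p (by norm_num : (3:ℕ) ≠ 0)) (ZMod p) w = 0) :
    ∃ u, w = (p : ZMod (p^3)) * u := by
  haveI : NeZero (p^3) := ⟨pow_ne_zero 3 hp.ne_zero⟩
  obtain ⟨n, rfl⟩ : ∃ n : ℕ, (n : ZMod (p^3)) = w := ⟨w.val, ZMod.natCast_rightInverse w⟩
  rw [map_natCast] at h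
  obtain ⟨m, rfl⟩ := (ZMod.natCast_eq_zero_iff n p).mp h
  exact ⟨m, by push_cast; ring⟩

-- bridge: sum over ZMod p = sum over range (p-1) of f(j+1), when f 0 = 0
lemma aux_bridge (p : ℕ) [NeZero p] {M : Type*} [AddCommMonoid M] (f : ZMod p → M)
    (h0 : f 0 = 0) :
    ∑ j ∈ range (p-1), f ((j+1 : ℕ) : ZMod p) = ∑ x : ZMod p, f x := by
  rw [aux_sum_univ f]
  have hp1 : p - 1 + 1 = p := Nat.succ_pred_eq_of_pos (NeZero.pos p)
  calc ∑ j ∈ range (p-1), f ((j+1 : ℕ) : ZMod p)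
      = ∑ j ∈ range (p-1), f (((j+1 : ℕ) : ℕ) : ZMod p) := rfl
    _ = ∑ j ∈ range (p-1+1), f ((j : ℕ) : ZMod p) := by
        rw [Finset.sum_range_succ' (fun j => f ((j : ℕ) : ZMod p)) (p-1)]
        simp [h0]
    _ = ∑ j ∈ range p, f ((j : ℕ) : ZMod p) := by rw [hp1]

theorem wolstenholme_choose_pred (p : ℕ) (hp : p.Prime) (h5 : 5 ≤ p) :
    (p : ℤ)^3 ∣ (Nat.choose (2 * p - 1) (p - 1) : ℤ) - 1 := by
  haveI : Fact p.Prime := ⟨hp⟩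
  haveI : NeZero p := ⟨hp.ne_zero⟩
  haveI : NeZero (p^3) := ⟨pow_ne_zero 3 hp.ne_zero⟩
  set R := ZMod (p^3) with hR
  set C : ℕ := Nat.choose (2 * p - 1) (p - 1) with hCdef
  set π : R := (p : R) with hπdef
  have hπ3 : π^3 = 0 := by
    rw [hπdef, ← Nat.cast_pow, ZMod.natCast_self]
  -- the inverse terms
  set x : ℕ → R := fun j => (((j+1 : ℕ) : R))⁻¹ with hxdef
  set s : Finset ℕ := range (p-1) with hsdef
  -- units
  have hcop : ∀ j ∈ s, Nat.Coprime (j+1) (p^3) := by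
    intro j hj
    have hj' := Finset.mem_range.mp hj
    have : ¬ p ∣ (j+1) := by
      intro hdvd
      have := Nat.le_of_dvd (by omega) hdvd
      omega
    exact (Nat.Coprime.pow_right 3 ((hp.coprime_iff_not_dvd.mpr this).symm))
  have hunit : ∀ j ∈ s, IsUnit (((j+1 : ℕ)) : R) :=
    fun j hj => (ZMod.isUnit_iff_coprime (j+1) (p^3)).mpr (hcop j hj)
  have hxj : ∀ j ∈ s, (((j+1 : ℕ)) : R) * x j = 1 :=
    fun j hj => ZMod.mul_inv_of_unit _ (hunit j hj)
  -- C = ∏ (1 + π x j) in R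
  have hFunit : IsUnit ((Nat.factorial (p-1) : ℕ) : R) := by
    refine (ZMod.isUnit_iff_coprime _ (p^3)).mpr (Nat.Coprime.pow_right 3 ?_)
    refine (hp.coprime_iff_not_dvd.mpr ?_).symm
    rw [hp.dvd_factorial]
    omega
  have hC : (C : R) = ∏ j ∈ s, (1 + π * x j) := by
    have h1 : ((Nat.factorial (p-1) : ℕ) : R) * (C : R) = ∏ j ∈ s, ((p : R) + ((j+1:ℕ) : R)) := by
      have := congrArg (fun n : ℕ => (n : R)) (aux_nat_prod p h5)
      replace this : ((Nat.factorial (p-1) : ℕ) : R) * (C : R) = ∏ j ∈ range (p-1), (((p+1+j : ℕ)) : R) :=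
        (Nat.cast_mul _ _).symm.trans (this.trans (Nat.cast_prod _ _))
      push_cast at this ⊢
      convert this using 2 with j
      push_cast
      ring
    have h2 : ∀ j ∈ s, ((p : R) + ((j+1:ℕ) : R)) = ((j+1:ℕ) : R) * (1 + π * x j) := by
      intro j hj
      have := hxj j hj
      rw [hπdef]
      linear_combination (-(p : R)) * this
    rw [Finset.prod_congr rfl h2, Finset.prod_mul_distrib] at h1
    have h3 : (∏ j ∈ s, ((j+1:ℕ) : R)) = ((Nat.factorial (p-1) : ℕ) : R) := by
      rw [← Finset.prod_range_add_one_eq_factorial (p-1)]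
      exact (Nat.cast_prod _ _).symm
    rw [h3] at h1
    exact hFunit.mul_left_cancel (by rw [h1])
  -- the castHom to ZMod p
  set φ : ZMod (p^3) →+* ZMod p := ZMod.castHom (dvd_pow_self p (by norm_num : (3:ℕ) ≠ 0)) (ZMod p) with hφdef
  have hφx : ∀ j ∈ s, φ (x j) = (((j+1:ℕ)) : ZMod p)⁻¹ := by
    intro j hj
    have h := congrArg φ (hxj j hj)
    rw [map_mul, map_natCast, map_one] at h
    exact eq_inv_of_mul_eq_one_left (by linear_combination h)
  -- expansion
  obtain ⟨E, hE, h2E⟩ := aux_expand π hπ3 x s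
  set S1 : R := ∑ j ∈ s, x j with hS1def
  set Q : R := ∑ j ∈ s, (x j)^2 with hQdef
  -- fact: φ Q = 0
  have hφQ : φ Q = 0 := by
    rw [hQdef, map_sum]
    calc ∑ j ∈ s, φ ((x j)^2)
        = ∑ j ∈ s, ((((j+1:ℕ)) : ZMod p)⁻¹)^2 :=
          Finset.sum_congr rfl (fun j hj => by rw [map_pow, hφx j hj])
      _ = ∑ y : ZMod p, (y⁻¹)^2 := aux_bridge p (fun y => (y⁻¹)^2) (by simp)
      _ = 0 := aux_inv_sq_sum p hp h5
  have hQp : ∃ u, Q = π * u := aux_lift p hp Q hφQ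
  -- fact: S1 = π^2 * t
  have hrefl : S1 = ∑ j ∈ s, x (p-2-j) := by
    rw [hS1def, hsdef]
    rw [← Finset.sum_range_reflect x (p-1)]
    refine Finset.sum_congr rfl fun j hj => ?_
    congr 1
  have hmem' : ∀ j ∈ s, (p-2-j) ∈ s := by
    intro j hj
    have := Finset.mem_range.mp hj
    exact Finset.mem_range.mpr (by omega)
  have hpair : ∀ j ∈ s, x j + x (p-2-j) = π * (x j * x (p-2-j)) := by
    intro j hj
    have hj' := Finset.mem_range.mp hj
    have h1 := hxj j hj
    have h2 := hxj (p-2-j) (hmem' j hj)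
    have hsum : (p-2-j) + 1 + (j+1) = p := by omega
    have hcast : (((p-2-j)+1 : ℕ) : R) + ((j+1 : ℕ) : R) = π := by
      rw [hπdef, ← Nat.cast_add, hsum]
    rw [← hcast]
    linear_combination (-(x (p-2-j))) * h1 - (x j) * h2
  have h2S1 : 2 * S1 = π * ∑ j ∈ s, x j * x (p-2-j) := by
    rw [two_mul]
    nth_rewrite 2 [hrefl]
    rw [← Finset.sum_add_distrib, Finset.mul_sum]
    exact Finset.sum_congr rfl hpair
  have hφW : φ (∑ j ∈ s, x j * x (p-2-j)) = 0 := by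
    rw [map_sum]
    calc ∑ j ∈ s, φ (x j * x (p-2-j))
        = ∑ j ∈ s, -(((((j+1:ℕ)) : ZMod p)⁻¹)^2) := by
          refine Finset.sum_congr rfl (fun j hj => ?_)
          have hj' := Finset.mem_range.mp hj
          rw [map_mul, hφx j hj, hφx (p-2-j) (hmem' j hj)]
          have hneg : ((((p-2-j)+1:ℕ)) : ZMod p) = -(((j+1:ℕ)) : ZMod p) := by
            have hsum : ((p-2-j)+1) + (j+1) = p := by omega
            refine eq_neg_of_add_eq_zero_left ?_
            rw [← Nat.cast_add, hsum, ZMod.natCast_self]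
          rw [hneg, inv_neg]
          ring
      _ = ∑ y : ZMod p, -((y⁻¹)^2) := aux_bridge p (fun y => -((y⁻¹)^2)) (by simp)
      _ = -∑ y : ZMod p, (y⁻¹)^2 := by rw [Finset.sum_neg_distrib]
      _ = 0 := by rw [aux_inv_sq_sum p hp h5, neg_zero]
  obtain ⟨u, hu⟩ := aux_lift p hp _ hφW
  have h2unit : ∃ v : R, 2 * v = 1 := by
    have : IsUnit (2 : R) := by
      have : ((2:ℕ) : R) = (2 : R) := by push_cast; rfl
      rw [← this]
      refine (ZMod.isUnit_iff_coprime 2 (p^3)).mpr (Nat.Coprime.pow_right 3 ?_)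
      refine (hp.coprime_iff_not_dvd.mpr ?_).symm
      intro h
      have := Nat.le_of_dvd (by norm_num) h
      omega
    exact ⟨(2:R)⁻¹, ZMod.mul_inv_of_unit _ this⟩
  obtain ⟨v, hv⟩ := h2unit
  have hS1p : ∃ t, S1 = π^2 * t := by
    refine ⟨v * u, ?_⟩
    have : 2 * S1 = π^2 * u := by rw [h2S1, hu]; ring
    calc S1 = (2 * v) * S1 := by rw [hv]; ring
    _ = v * (2 * S1) := by ring
    _ = v * (π^2 * u) := by rw [this]
    _ = π^2 * (v * u) := by ring
  obtain ⟨t, ht⟩ := hS1p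
  obtain ⟨uq, huq⟩ := hQp
  -- finish: (C : R) = 1
  have hfinal : (C : R) = 1 := by
    have hπS1 : π * S1 = 0 := by
      rw [ht]
      calc π * (π^2 * t) = π^3 * t := by ring
      _ = 0 := by rw [hπ3]; ring
    have hπ2E : π^2 * E = 0 := by
      have h2 : 2 * (π^2 * E) = 0 := by
        have : π^2 * (2 * E) = π^2 * ((S1)^2 - Q) := by rw [h2E]
        calc 2 * (π^2 * E) = π^2 * (2 * E) := by ring
        _ = π^2 * (S1^2 - Q) := by rw [h2E]
        _ = π^2 * S1^2 - π^2 * Q := by ring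
        _ = 0 := by
            rw [ht, huq]
            calc π^2 * (π^2*t)^2 - π^2 * (π * uq) = π^3 * (π^3 * t^2 - uq) := by ring
            _ = 0 := by rw [hπ3]; ring
      calc π^2 * E = (2 * v) * (π^2 * E) := by rw [hv]; ring
      _ = v * (2 * (π^2 * E)) := by ring
      _ = 0 := by rw [h2]; ring
    rw [hC, hE, hπS1, hπ2E]
    ring
  -- conclude
  have : (((C : ℤ) - 1 : ℤ) : ZMod (p^3)) = 0 := by
    push_cast
    rw [hfinal]
    ring
  have hdvd := (ZMod.intCast_zmod_eq_zero_iff_dvd ((C : ℤ) - 1) (p^3)).mp this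
  push_cast at hdvd
  exact hdvd
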